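/- Let ζ>0 and 0<α<2. Let ρ be a finite Borel measure on [0,1] such that lim_{λ→0+} ρ([0,λ])/λ^ζ = 1. For n ∈ ℕ define the gradient-descent loss L_n = (1/2)∫_{[0,1]} (1-αλ)^{2n} ρ(dλ). Then lim_{n→∞} (2αn)^ζ · L_n = Γ(ζ+1)/2, where Γ is the real Gamma function. -/

import Mathlib

open MeasureTheory Filter Set

lemma ftc_aux (a : ℝ) (n : ℕ) (lam : ℝ) :
    (1 - a * lam) ^ (2*n) = (1 - a) ^ (2*n)
      + ∫ u in lam..(1:ℝ), (2*n*a) * (1 - a*u) ^ (2*n - 1) := by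
  have hder : ∀ u : ℝ, HasDerivAt (fun u : ℝ => (1 - a*u) ^ (2*n))
      (-((2*n*a) * (1 - a*u) ^ (2*n - 1))) u := by
    intro u
    have h1 : HasDerivAt (fun u : ℝ => 1 - a*u) (-a) u := by
      simpa using ((hasDerivAt_id u).const_mul a).const_sub 1
    have h2 := h1.fun_pow (2*n)
    refine h2.congr_deriv ?_
    push_cast
    ring
  have hint : IntervalIntegrable (fun u : ℝ => -((2*n*a) * (1 - a*u) ^ (2*n - 1)))
      volume lam 1 := by
    apply Continuous.intervalIntegrable
    fun_prop
  have h3 := intervalIntegral.integral_eq_sub_of_hasDerivAt (fun u _ => hder u) hint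
  rw [intervalIntegral.integral_neg] at h3
  have : (∫ u in lam..(1:ℝ), (2*n*a) * (1 - a*u) ^ (2*n - 1))
      = (1 - a*lam)^(2*n) - (1-a*1)^(2*n) := by linarith
  rw [this]; ring_nf

lemma fubini_aux (ρ : Measure ℝ) [IsFiniteMeasure ρ] (h : ℝ → ℝ) (hh : Continuous h) :
    ∫ lam in Icc (0:ℝ) 1, (∫ u in lam..(1:ℝ), h u) ∂ρ
      = ∫ u in Ioc (0:ℝ) 1, h u * (ρ (Icc 0 u)).toReal := by
  set μ := ρ.restrict (Icc (0:ℝ) 1) with hμ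
  set ν := volume.restrict (Ioc (0:ℝ) 1) with hν
  have : IsFiniteMeasure ν := by
    constructor
    rw [hν, Measure.restrict_apply_univ]
    exact measure_Ioc_lt_top
  set f : ℝ → ℝ → ℝ := fun lam u => Set.indicator (Ici lam) h u with hf
  -- integrability on product
  have hmeas : AEStronglyMeasurable (Function.uncurry f) (μ.prod ν) := by
    have : Function.uncurry f = Set.indicator {p : ℝ × ℝ | p.1 ≤ p.2} (fun p => h p.2) := by
      ext p
      by_cases hc : p.1 ≤ p.2 <;>
        simp [Function.uncurry, hf, Set.indicator_apply, hc, mem_Ici]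
    rw [this]
    exact ((hh.comp continuous_snd).stronglyMeasurable.indicator
      (isClosed_le continuous_fst continuous_snd).measurableSet).aestronglyMeasurable
  obtain ⟨C, hC⟩ : ∃ C, ∀ u ∈ Icc (0:ℝ) 1, |h u| ≤ C := by
    obtain ⟨C, hC⟩ := (isCompact_Icc.image (hh.abs)).bddAbove
    exact ⟨C, fun u hu => hC ⟨u, hu, rfl⟩⟩
  have hae2 : ∀ᵐ p : ℝ × ℝ ∂(μ.prod ν), p.2 ∈ Ioc (0:ℝ) 1 := by
    rw [MeasureTheory.ae_iff]
    have hsub : {p : ℝ × ℝ | ¬ p.2 ∈ Ioc (0:ℝ) 1} ⊆ (univ : Set ℝ) ×ˢ (Ioc (0:ℝ) 1)ᶜ := by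
      intro p hp; exact ⟨trivial, hp⟩
    refine measure_mono_null hsub ?_
    rw [Measure.prod_prod]
    have : ν (Ioc (0:ℝ) 1)ᶜ = 0 := by
      rw [hν, Measure.restrict_apply (measurableSet_Ioc.compl)]
      simp
    rw [this, mul_zero]
  have hint : Integrable (Function.uncurry f) (μ.prod ν) := by
    refine Integrable.mono' (integrable_const C) hmeas ?_
    filter_upwards [hae2] with p hp
    have : ‖Function.uncurry f p‖ ≤ |h p.2| := by
      simp only [Function.uncurry, hf, Real.norm_eq_abs]
      by_cases hc : p.2 ∈ Ici p.1 <;> simp [Set.indicator_apply, hc, abs_nonneg]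
    exact this.trans (hC p.2 ⟨hp.1.le, hp.2⟩)
  have hswap := MeasureTheory.integral_integral_swap hint
  -- identify LHS
  have hLHS : ∫ lam, (∫ u, f lam u ∂ν) ∂μ
      = ∫ lam in Icc (0:ℝ) 1, (∫ u in lam..(1:ℝ), h u) ∂ρ := by
    rw [hμ]
    refine setIntegral_congr_fun measurableSet_Icc (fun lam hlam => ?_)
    have h1 : ∫ u, f lam u ∂ν = ∫ u in Ioc (0:ℝ) 1 ∩ Ici lam, h u := by
      rw [hν, hf, setIntegral_indicator measurableSet_Ici]
    have h2 : (Ioc (0:ℝ) 1 ∩ Ici lam : Set ℝ) =ᵐ[volume] Ioc lam 1 := by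
      rw [MeasureTheory.ae_eq_set]
      constructor
      · refine measure_mono_null (fun u hu => ?_) (measure_singleton lam)
        simp only [mem_diff, mem_inter_iff, mem_Ioc, mem_Ici, not_and, not_le] at hu
        simp only [mem_singleton_iff]
        rcases lt_or_eq_of_le hu.1.2 with hlt | heq
        · exact absurd (hu.2 hlt) (not_lt.mpr hu.1.1.2)
        · exact heq.symm
      · refine measure_mono_null (fun u hu => ?_) (measure_empty (μ := volume) (α := ℝ))
        exact absurd (⟨⟨lt_of_le_of_lt hlam.1 hu.1.1, hu.1.2⟩, hu.1.1.le⟩ :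
          u ∈ Ioc 0 1 ∩ Ici lam) hu.2
    rw [h1, setIntegral_congr_set h2, intervalIntegral.integral_of_le hlam.2]
  -- identify RHS
  have hRHS : ∫ u, (∫ lam, f lam u ∂μ) ∂ν
      = ∫ u in Ioc (0:ℝ) 1, h u * (ρ (Icc 0 u)).toReal := by
    rw [hν]
    refine setIntegral_congr_fun measurableSet_Ioc (fun u hu => ?_)
    have h1 : ∀ lam, f lam u = Set.indicator (Iic u) (fun _ => h u) lam := by
      intro lam
      by_cases hc : lam ≤ u <;> simp [hf, Set.indicator_apply, hc, mem_Ici, mem_Iic]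
    simp_rw [h1]
    rw [hμ, setIntegral_indicator measurableSet_Iic, setIntegral_const]
    have h2 : (Icc (0:ℝ) 1 ∩ Iic u) = Icc 0 u := by
      ext x
      simp only [mem_inter_iff, mem_Icc, mem_Iic]
      exact ⟨fun hx => ⟨hx.1.1, hx.2⟩, fun hx => ⟨⟨hx.1, hx.2.trans hu.2⟩, hx.2⟩⟩
    rw [h2, smul_eq_mul, mul_comm]; rfl
  exact hLHS.symm.trans (hswap.trans hRHS)

lemma step1 (ρ : Measure ℝ) [IsFiniteMeasure ρ] (α : ℝ) (n : ℕ) :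
    ∫ lam in Icc (0:ℝ) 1, (1 - α*lam)^(2*n) ∂ρ
      = (1-α)^(2*n) * (ρ (Icc (0:ℝ) 1)).toReal
        + ∫ u in Ioc (0:ℝ) 1, ((2*n*α) * (1-α*u)^(2*n-1)) * (ρ (Icc 0 u)).toReal := by
  have hcont : Continuous (fun u : ℝ => (2*n*α) * (1-α*u)^(2*n-1)) := by fun_prop
  have hfun : (fun lam : ℝ => ∫ u in lam..(1:ℝ), (2*n*α) * (1-α*u)^(2*n-1))
      = fun lam => (1 - α*lam)^(2*n) - (1-α)^(2*n) := by
    funext lam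
    have h := ftc_aux α n lam
    linarith
  have hint2 : Integrable (fun lam : ℝ => ∫ u in lam..(1:ℝ), (2*n*α) * (1-α*u)^(2*n-1))
      (ρ.restrict (Icc 0 1)) := by
    rw [hfun]
    refine Integrable.sub ?_ (integrable_const _)
    have : Continuous (fun lam : ℝ => (1 - α*lam)^(2*n)) := by fun_prop
    exact (this.continuousOn.integrableOn_compact isCompact_Icc).mono_measure le_rfl
  calc ∫ lam in Icc (0:ℝ) 1, (1 - α*lam)^(2*n) ∂ρ
      = ∫ lam in Icc (0:ℝ) 1,
          ((1-α)^(2*n) + ∫ u in lam..(1:ℝ), (2*n*α) * (1-α*u)^(2*n-1)) ∂ρ :=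
        setIntegral_congr_fun measurableSet_Icc (fun lam _ => ftc_aux α n lam)
    _ = (1-α)^(2*n) * (ρ (Icc (0:ℝ) 1)).toReal
        + ∫ lam in Icc (0:ℝ) 1, (∫ u in lam..(1:ℝ), (2*n*α) * (1-α*u)^(2*n-1)) ∂ρ := by
        rw [integral_add (integrable_const _) hint2, setIntegral_const, smul_eq_mul, mul_comm]; rfl
    _ = (1-α)^(2*n) * (ρ (Icc (0:ℝ) 1)).toReal
        + ∫ u in Ioc (0:ℝ) 1, ((2*n*α) * (1-α*u)^(2*n-1)) * (ρ (Icc 0 u)).toReal := by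
        rw [fubini_aux ρ _ hcont]

lemma scaling_aux (F : ℝ → ℝ) (α ζ : ℝ) (hα0 : 0 < α)
    (n : ℕ) (hn : 1 ≤ n) :
    (2*α*n)^ζ * ∫ u in Ioc (0:ℝ) 1, ((2*n*α) * (1-α*u)^(2*n-1)) * F u
      = ∫ s, Set.indicator (Ioc 0 (2*α*n))
          (fun s => (2*α*n)^ζ * (1 - s/(2*n))^(2*n-1) * F (s/(2*α*n))) s := by
  have hn0 : (0:ℝ) < n := by exact_mod_cast hn
  have hb : (0:ℝ) < 2*α*n := by positivity
  have hα' : α ≠ 0 := hα0.ne'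
  have hnn : (n:ℝ) ≠ 0 := hn0.ne'
  set g : ℝ → ℝ := fun u => ((2*n*α) * (1-α*u)^(2*n-1)) * F u with hg
  have key : ∀ s : ℝ, ((2*α*n)⁻¹ * s ∈ Ioc (0:ℝ) 1) ↔ (s ∈ Ioc 0 (2*α*n)) := by
    intro s
    rw [mem_Ioc, mem_Ioc, inv_mul_eq_div, div_le_one hb]
    constructor
    · rintro ⟨p, q⟩
      refine ⟨?_, q⟩
      have h := mul_pos p hb
      rwa [div_mul_cancel₀ _ hb.ne'] at h
    · rintro ⟨p, q⟩
      exact ⟨div_pos p hb, q⟩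
  have h1 : ∫ u in Ioc (0:ℝ) 1, g u = ∫ u, Set.indicator (Ioc (0:ℝ) 1) g u := by
    rw [integral_indicator measurableSet_Ioc]
  have h2 := MeasureTheory.Measure.integral_comp_mul_left
    (Set.indicator (Ioc (0:ℝ) 1) g) (2*α*n)⁻¹
  rw [inv_inv, abs_of_pos hb, smul_eq_mul] at h2
  have h3 : ∫ u, Set.indicator (Ioc (0:ℝ) 1) g u
      = (2*α*n)⁻¹ * ∫ x, Set.indicator (Ioc (0:ℝ) 1) g ((2*α*n)⁻¹ * x) := by
    rw [h2, ← mul_assoc, inv_mul_cancel₀ hb.ne', one_mul]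
  rw [h1, h3, ← mul_assoc, ← integral_const_mul]
  refine integral_congr_ae (Eventually.of_forall fun s => ?_)
  beta_reduce
  by_cases hs : s ∈ Ioc 0 (2*α*(n:ℝ))
  · rw [Set.indicator_of_mem ((key s).mpr hs), Set.indicator_of_mem hs]
    simp only [hg]
    rw [inv_mul_eq_div]
    have e1 : α * (s / (2*α*(n:ℝ))) = s / (2*(n:ℝ)) := by
      field_simp
    rw [e1]
    generalize F (s / (2*α*(n:ℝ))) = w
    field_simp
  · rw [Set.indicator_of_notMem (fun hmem => hs ((key s).mp hmem)),
      Set.indicator_of_notMem hs]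
    simp

set_option maxHeartbeats 1000000 in
lemma dct_aux (ζ α : ℝ) (hζ : 0 < ζ) (hα0 : 0 < α) (hα2 : α < 2)
    (F : ℝ → ℝ) (hFmeas : Measurable F) (hFnonneg : ∀ u, 0 ≤ F u)
    (M : ℝ) (hM : ∀ u, F u ≤ M)
    (hlim : Tendsto (fun l : ℝ => F l / l ^ ζ) (nhdsWithin 0 (Ioi 0)) (nhds 1)) :
    Tendsto (fun n : ℕ => ∫ s, Set.indicator (Ioc 0 (2*α*n))
        (fun s => (2*α*n)^ζ * (1 - s/(2*(n:ℝ)))^(2*n-1) * F (s/(2*α*n))) s)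
      atTop (nhds (Real.Gamma (ζ+1))) := by
  have hM0 : 0 ≤ M := (hFnonneg 0).trans (hM 0)
  -- get δ
  obtain ⟨δ, hδ0, hFδ⟩ : ∃ δ, 0 < δ ∧ ∀ l ∈ Ioc (0:ℝ) δ, F l ≤ 2 * l ^ ζ := by
    have h2 : ∀ᶠ l in nhdsWithin 0 (Ioi 0), F l / l ^ ζ < 2 :=
      hlim.eventually_lt_const one_lt_two
    obtain ⟨δ', hδ'0, hδ'⟩ := mem_nhdsGT_iff_exists_Ioc_subset.mp h2
    refine ⟨δ', hδ'0, fun l hl => ?_⟩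
    have hp : 0 < l ^ ζ := Real.rpow_pos_of_pos hl.1 ζ
    have := hδ' hl
    simp only [mem_setOf_eq] at this
    exact (le_of_lt ((div_lt_iff₀ hp).mp this))
  set c : ℝ := min α (2 - α) with hc
  have hc0 : 0 < c := lt_min hα0 (by linarith)
  have hcα : c ≤ α := min_le_left _ _
  have hc2 : c ≤ 2 - α := min_le_right _ _
  set a : ℝ := c / (2*α) with ha
  have ha0 : 0 < a := by positivity
  set C : ℝ := 2 + M / δ ^ ζ with hC
  have hδζ : 0 < δ ^ ζ := Real.rpow_pos_of_pos hδ0 ζ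
  have hC2 : 2 ≤ C := by
    have : 0 ≤ M / δ ^ ζ := div_nonneg hM0 hδζ.le
    simp only [hC]; linarith
  have hC0 : 0 ≤ C := by linarith
  set D : ℝ → ℝ := Set.indicator (Ioi 0) (fun s => C * (s ^ ζ * Real.exp (-(a * s)))) with hD
  set G : ℝ → ℝ := Set.indicator (Ioi 0) (fun s => s ^ ζ * Real.exp (-s)) with hG
  have hGint : ∫ s, G s = Real.Gamma (ζ + 1) := by
    rw [hG, integral_indicator measurableSet_Ioi,
      Real.Gamma_eq_integral (by linarith : (0:ℝ) < ζ + 1)]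
    have e : ζ + 1 - 1 = ζ := by ring
    rw [e]
    exact setIntegral_congr_fun measurableSet_Ioi (fun x _ => mul_comm _ _)
  -- measurability
  have hmeas : ∀ n : ℕ, AEStronglyMeasurable (fun s => Set.indicator (Ioc 0 (2*α*(n:ℝ)))
      (fun s => (2*α*n)^ζ * (1 - s/(2*(n:ℝ)))^(2*n-1) * F (s/(2*α*n))) s) volume := by
    intro n
    have h1 : Measurable fun s : ℝ => (2*α*(n:ℝ))^ζ * (1 - s/(2*(n:ℝ)))^(2*n-1) := by fun_prop
    have h2 : Measurable fun s : ℝ => F (s/(2*α*(n:ℝ))) :=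
      hFmeas.comp (measurable_id.div_const _)
    exact ((h1.mul h2).indicator measurableSet_Ioc).aestronglyMeasurable
  -- integrability of the bound
  have hDint : Integrable D := by
    have h0 : IntegrableOn (fun x : ℝ => Real.exp (-x) * x ^ (ζ + 1 - 1)) (Ioi 0) volume :=
      Real.GammaIntegral_convergent (by linarith)
    have h1 : IntegrableOn (fun x : ℝ => Real.exp (-(a*x)) * (a*x) ^ (ζ + 1 - 1)) (Ioi 0)
        volume := by
      have h1' := (integrableOn_Ioi_comp_mul_left_iff
        (fun x : ℝ => Real.exp (-x) * x ^ (ζ + 1 - 1)) 0 ha0).mpr (by rwa [mul_zero])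
      exact h1'
    have h2 : IntegrableOn (fun x : ℝ => C * (x ^ ζ * Real.exp (-(a * x)))) (Ioi 0) volume := by
      refine IntegrableOn.congr_fun ((h1.const_mul ((a ^ ζ)⁻¹)).const_mul C)
        (fun x hx => ?_) measurableSet_Ioi
      have hx0 : (0:ℝ) < x := hx
      have haζ : (0:ℝ) < a ^ ζ := Real.rpow_pos_of_pos ha0 ζ
      have e : ζ + 1 - 1 = ζ := by ring
      rw [e, Real.mul_rpow ha0.le hx0.le]
      field_simp
    rw [hD, integrable_indicator_iff measurableSet_Ioi]
    exact h2
  have hbound : ∀ n : ℕ, ∀ᵐ s : ℝ, ‖Set.indicator (Ioc 0 (2*α*(n:ℝ)))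
      (fun s => (2*α*(n:ℝ))^ζ * (1 - s/(2*(n:ℝ)))^(2*n-1) * F (s/(2*α*(n:ℝ)))) s‖ ≤ D s := by
    intro n
    refine Eventually.of_forall (fun s => ?_)
    by_cases hs : s ∈ Ioc (0:ℝ) (2*α*(n:ℝ))
    · have hs0 : 0 < s := hs.1
      have hDs : D s = C * (s ^ ζ * Real.exp (-(a * s))) := indicator_of_mem hs0 _
      have hn1 : 1 ≤ n := by
        rcases Nat.eq_zero_or_pos n with rfl | h
        · exfalso; simp only [Nat.cast_zero, mul_zero, Ioc_self] at hs; exact hs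
        · exact h
      have hn0 : (0:ℝ) < n := by exact_mod_cast hn1
      have hbpos : (0:ℝ) < 2*α*n := by positivity
      set lam : ℝ := s / (2*α*(n:ℝ)) with hlam
      have hlam0 : 0 < lam := div_pos hs0 hbpos
      have hlam1 : lam ≤ 1 := by
        rw [hlam, div_le_one hbpos]; exact hs.2
      have hsl : s = 2*α*n*lam := by rw [hlam]; field_simp
      rw [Set.indicator_of_mem hs]
      have hrpnn : (0:ℝ) ≤ (2*α*(n:ℝ))^ζ := Real.rpow_nonneg hbpos.le ζ
      have habs0 : |(2*α*(n:ℝ))^ζ * (1 - s/(2*(n:ℝ)))^(2*n-1) * F lam|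
          = (2*α*(n:ℝ))^ζ * |1 - s/(2*(n:ℝ))|^(2*n-1) * F lam := by
        rw [abs_mul, abs_mul, abs_of_nonneg hrpnn, abs_of_nonneg (hFnonneg _), abs_pow]
      rw [Real.norm_eq_abs, habs0]
      -- bound2
      have hsn2 : s / (2*(n:ℝ)) = α * lam := by rw [hlam]; field_simp
      have t1 : c*lam ≤ (2-α)*lam := mul_le_mul_of_nonneg_right hc2 hlam0.le
      have t2 : α*lam ≤ α := mul_le_of_le_one_right hα0.le hlam1
      have t3 : (2-α)*lam ≤ 2-α := mul_le_of_le_one_right (by linarith) hlam1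
      have t4 : c*lam ≤ α*lam := mul_le_mul_of_nonneg_right hcα hlam0.le
      have hab : |1 - s/(2*(n:ℝ))| ≤ 1 - c * lam := by
        rw [hsn2, abs_le]
        constructor
        · linarith
        · linarith
      have h1c : 0 ≤ 1 - c * lam := by linarith
      have bound2 : |1 - s/(2*(n:ℝ))|^(2*n-1) ≤ Real.exp (-(a * s)) := by
        calc |1 - s/(2*(n:ℝ))|^(2*n-1) ≤ (1 - c*lam)^(2*n-1) :=
              pow_le_pow_left₀ (abs_nonneg _) hab _
          _ ≤ (Real.exp (-(c*lam)))^(2*n-1) := by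
              refine pow_le_pow_left₀ h1c ?_ _
              linarith [Real.add_one_le_exp (-(c*lam))]
          _ = Real.exp (((2*n-1 : ℕ):ℝ) * (-(c*lam))) := by rw [Real.exp_nat_mul]
          _ ≤ Real.exp (-(a * s)) := by
              refine Real.exp_le_exp.mpr ?_
              have hcast : ((2*n-1 : ℕ):ℝ) = 2*(n:ℝ) - 1 := by
                have : (1:ℕ) ≤ 2*n := by omega
                push_cast [Nat.cast_sub this]
                ring
              have has : a * s = c * n * lam := by
                rw [hsl, ha]; field_simp
              rw [hcast, has]
              have hmono : c*lam*(n:ℝ) ≤ c*lam*(2*(n:ℝ)-1) :=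
                mul_le_mul_of_nonneg_left
                  (by have h1n : (1:ℝ) ≤ (n:ℝ) := by exact_mod_cast hn1
                      linarith) (mul_nonneg hc0.le hlam0.le)
              nlinarith [hmono]
      -- bound1
      have hsζ : s ^ ζ = (2*α*(n:ℝ))^ζ * lam ^ ζ := by
        rw [hsl, Real.mul_rpow hbpos.le hlam0.le]
      have bound1 : (2*α*(n:ℝ))^ζ * F lam ≤ C * s ^ ζ := by
        by_cases hcase : lam ≤ δ
        · have hb := hFδ lam ⟨hlam0, hcase⟩
          have hsznn : 0 ≤ s ^ ζ := Real.rpow_nonneg hs0.le ζ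
          calc (2*α*(n:ℝ))^ζ * F lam ≤ (2*α*(n:ℝ))^ζ * (2 * lam ^ ζ) :=
                mul_le_mul_of_nonneg_left hb hrpnn
            _ = 2 * s ^ ζ := by rw [hsζ]; ring
            _ ≤ C * s ^ ζ := mul_le_mul_of_nonneg_right hC2 hsznn
        · push_neg at hcase
          have hδlam : δ ^ ζ ≤ lam ^ ζ := Real.rpow_le_rpow hδ0.le hcase.le hζ.le
          have hsznn : 0 ≤ s ^ ζ := Real.rpow_nonneg hs0.le ζ
          calc (2*α*(n:ℝ))^ζ * F lam ≤ (2*α*(n:ℝ))^ζ * M :=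
                mul_le_mul_of_nonneg_left (hM lam) hrpnn
            _ ≤ M / δ ^ ζ * s ^ ζ := by
                rw [hsζ, div_mul_eq_mul_div, le_div_iff₀ hδζ]
                nlinarith [mul_nonneg (mul_nonneg hM0 hrpnn) (sub_nonneg.mpr hδlam)]
            _ ≤ C * s ^ ζ := by
                refine mul_le_mul_of_nonneg_right ?_ hsznn
                simp only [hC]; linarith
      calc (2*α*(n:ℝ))^ζ * |1 - s/(2*(n:ℝ))|^(2*n-1) * F lam
          = ((2*α*(n:ℝ))^ζ * F lam) * |1 - s/(2*(n:ℝ))|^(2*n-1) := by ring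
        _ ≤ (C * s ^ ζ) * Real.exp (-(a * s)) := by
            exact mul_le_mul bound1 bound2 (pow_nonneg (abs_nonneg _) _)
              (mul_nonneg hC0 (Real.rpow_nonneg hs0.le ζ))
        _ = D s := by rw [hDs]; ring
    · rw [Set.indicator_of_notMem hs]
      simp only [norm_zero]
      refine Set.indicator_nonneg (fun x hx => ?_) s
      have : (0:ℝ) < x := hx
      positivity
  have hpt : ∀ᵐ s : ℝ, Tendsto (fun n : ℕ => Set.indicator (Ioc 0 (2*α*(n:ℝ)))
      (fun s => (2*α*(n:ℝ))^ζ * (1 - s/(2*(n:ℝ)))^(2*n-1) * F (s/(2*α*(n:ℝ)))) s)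
      atTop (nhds (G s)) := by
    refine Eventually.of_forall (fun s => ?_)
    rcases le_or_gt s 0 with hsneg | hs0
    · have h1 : ∀ n : ℕ, Set.indicator (Ioc 0 (2*α*(n:ℝ)))
          (fun s => (2*α*(n:ℝ))^ζ * (1 - s/(2*(n:ℝ)))^(2*n-1) * F (s/(2*α*(n:ℝ)))) s = 0 :=
        fun n => Set.indicator_of_notMem (fun h => absurd h.1 (not_lt.mpr hsneg)) _
      have h2 : G s = 0 := Set.indicator_of_notMem (by simpa using hsneg) _
      simp_rw [h1, h2]
      exact tendsto_const_nhds
    · have hGs : G s = s ^ ζ * Real.exp (-s) := Set.indicator_of_mem hs0 _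
      rw [hGs]
      -- A part
      have hA : Tendsto (fun n : ℕ => F (s/(2*α*(n:ℝ))) / (s/(2*α*(n:ℝ))) ^ ζ)
          atTop (nhds 1) := by
        refine hlim.comp ?_
        rw [tendsto_nhdsWithin_iff]
        constructor
        · have h := tendsto_const_div_atTop_nhds_zero_nat (s/(2*α))
          refine h.congr (fun n => ?_)
          rw [div_div, mul_assoc]  -- s/(2*α)/n = s/(2*α*n)?
        · filter_upwards [eventually_ge_atTop 1] with n hn
          have hn0 : (0:ℝ) < n := by exact_mod_cast hn
          exact div_pos hs0 (by positivity)
      -- B part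
      have h2n : Tendsto (fun n : ℕ => 2*n) atTop atTop :=
        tendsto_atTop_mono (fun n => Nat.le_mul_of_pos_left n (by norm_num)) tendsto_id
      have hC1 : Tendsto (fun n : ℕ => (1 + (-s)/((2*n : ℕ):ℝ))^(2*n : ℕ))
          atTop (nhds (Real.exp (-s))) := (Real.tendsto_one_add_div_pow_exp (-s)).comp h2n
      have hCc : Tendsto (fun n : ℕ => (1 - s/(2*(n:ℝ)))^(2*n))
          atTop (nhds (Real.exp (-s))) := by
        refine hC1.congr (fun n => ?_)
        push_cast
        ring_nf
      have hDd : Tendsto (fun n : ℕ => 1 - s/(2*(n:ℝ))) atTop (nhds 1) := by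
        have h := tendsto_const_div_atTop_nhds_zero_nat (s/2)
        have h2 : Tendsto (fun n : ℕ => s/(2*(n:ℝ))) atTop (nhds 0) := by
          refine h.congr (fun n => ?_)
          rw [div_div]
        simpa using tendsto_const_nhds.sub h2
      have hquot : Tendsto (fun n : ℕ => (1 - s/(2*(n:ℝ)))^(2*n) / (1 - s/(2*(n:ℝ))))
          atTop (nhds (Real.exp (-s) / 1)) := hCc.div hDd one_ne_zero
      rw [div_one] at hquot
      have hB : Tendsto (fun n : ℕ => (1 - s/(2*(n:ℝ)))^(2*n-1))
          atTop (nhds (Real.exp (-s))) := by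
        refine Filter.Tendsto.congr' ?_ hquot
        filter_upwards [hDd.eventually_ne one_ne_zero, eventually_ge_atTop 1] with n hne hn1
        rw [div_eq_iff hne, ← pow_succ]
        congr 1
        omega
      -- combine
      have hprod : Tendsto (fun n : ℕ =>
          (F (s/(2*α*(n:ℝ))) / (s/(2*α*(n:ℝ))) ^ ζ) * s ^ ζ * (1 - s/(2*(n:ℝ)))^(2*n-1))
          atTop (nhds (1 * s ^ ζ * Real.exp (-s))) := (hA.mul_const _).mul hB
      rw [one_mul] at hprod
      refine Filter.Tendsto.congr' ?_ hprod
      have hev : ∀ᶠ n : ℕ in atTop, s ≤ 2*α*(n:ℝ) :=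
        (tendsto_natCast_atTop_atTop.const_mul_atTop
          (by positivity : (0:ℝ) < 2*α)).eventually_ge_atTop s
      filter_upwards [hev, eventually_ge_atTop 1] with n hsn hn1
      have hn0 : (0:ℝ) < n := by exact_mod_cast hn1
      have hbpos : (0:ℝ) < 2*α*n := by positivity
      have hlam0 : (0:ℝ) < s/(2*α*(n:ℝ)) := div_pos hs0 hbpos
      have hlζ : (0:ℝ) < (s/(2*α*(n:ℝ))) ^ ζ := Real.rpow_pos_of_pos hlam0 ζ
      have hsζ : (2*α*(n:ℝ))^ζ * (s/(2*α*(n:ℝ))) ^ ζ = s ^ ζ := by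
        rw [← Real.mul_rpow hbpos.le hlam0.le]
        congr 1
        field_simp
      rw [Set.indicator_of_mem (show s ∈ Ioc 0 (2*α*(n:ℝ)) from ⟨hs0, hsn⟩)]
      rw [← hsζ]
      field_simp
  have key := MeasureTheory.tendsto_integral_of_dominated_convergence D hmeas hDint hbound hpt
  rw [hGint] at key
  exact key

lemma geom_aux (ζ α : ℝ) (hζ : 0 < ζ) (hα0 : 0 < α) (hα2 : α < 2) (M : ℝ) :
    Tendsto (fun n : ℕ => (2*α*(n:ℝ))^ζ * ((1-α)^(2*n) * M)) atTop (nhds 0) := by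
  have hq0 : 0 ≤ (1-α)^2 := sq_nonneg _
  have hq1 : (1-α)^2 < 1 := by nlinarith
  rcases eq_or_lt_of_le hq0 with hq0' | hq0'
  · refine Tendsto.congr' ?_ (tendsto_const_nhds (x := (0:ℝ)))
    filter_upwards [eventually_ge_atTop 1] with n hn
    rw [pow_mul, ← hq0', zero_pow (by omega), zero_mul, mul_zero]
  · have hb : 0 < -Real.log ((1-α)^2) := by
      have := Real.log_neg hq0' hq1
      linarith
    have h0 := tendsto_rpow_mul_exp_neg_mul_atTop_nhds_zero ζ (-Real.log ((1-α)^2)) hb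
    have h1 := h0.comp (tendsto_natCast_atTop_atTop (R := ℝ))
    have h2 := h1.const_mul ((2*α)^ζ * M)
    rw [mul_zero] at h2
    refine Tendsto.congr' ?_ h2
    filter_upwards [eventually_ge_atTop 1] with n hn
    have hn0 : (0:ℝ) ≤ n := Nat.cast_nonneg n
    have e1 : Real.exp (-(-Real.log ((1-α)^2)) * n) = ((1-α)^2)^n := by
      rw [neg_neg, mul_comm, Real.exp_nat_mul, Real.exp_log hq0']
    simp only [Function.comp]
    rw [e1, pow_mul, Real.mul_rpow (by positivity) hn0]
    ring

theorem gd_constant_rate_loss_asymptotic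
    (ζ α : ℝ) (hζ : 0 < ζ) (hα0 : 0 < α) (hα2 : α < 2)
    (ρ : Measure ℝ) [IsFiniteMeasure ρ]
    (hsupp : ρ (Set.Icc (0:ℝ) 1)ᶜ = 0)
    (hlim : Tendsto (fun l : ℝ => (ρ (Set.Icc 0 l)).toReal / l ^ ζ)
      (nhdsWithin 0 (Set.Ioi 0)) (nhds 1)) :
    Tendsto (fun n : ℕ =>
        (2 * α * n) ^ ζ * ((1/2) * ∫ l in Set.Icc (0:ℝ) 1, (1 - α * l) ^ (2 * n) ∂ρ))
      atTop (nhds (Real.Gamma (ζ + 1) / 2)) := by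
  have hFmono : Monotone (fun u : ℝ => (ρ (Icc 0 u)).toReal) := fun u v huv =>
    ENNReal.toReal_mono (measure_ne_top ρ _) (measure_mono (Icc_subset_Icc_right huv))
  have hFmeas : Measurable (fun u : ℝ => (ρ (Icc 0 u)).toReal) := hFmono.measurable
  have hFnonneg : ∀ u : ℝ, 0 ≤ (ρ (Icc 0 u)).toReal := fun u => ENNReal.toReal_nonneg
  have hM : ∀ u : ℝ, (ρ (Icc 0 u)).toReal ≤ (ρ univ).toReal := fun u =>
    ENNReal.toReal_mono (measure_ne_top ρ _) (measure_mono (subset_univ _))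
  have hdct := dct_aux ζ α hζ hα0 hα2 _ hFmeas hFnonneg _ hM hlim
  have hgeom := geom_aux ζ α hζ hα0 hα2 (ρ (Icc (0:ℝ) 1)).toReal
  have hsum := (hgeom.add hdct).const_mul (1/2 : ℝ)
  have heq : (1/2 : ℝ) * (0 + Real.Gamma (ζ+1)) = Real.Gamma (ζ+1) / 2 := by ring
  rw [heq] at hsum
  refine Tendsto.congr' ?_ hsum
  filter_upwards [eventually_ge_atTop 1] with n hn
  rw [step1 ρ α n,
    ← scaling_aux (fun u => (ρ (Icc 0 u)).toReal) α ζ hα0 n hn]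
  ring
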